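/- arXiv:2402.06603 — 3 statements merged into one kernel-verified Lean document; each statement's English description precedes it below -/
import Mathlib

section
/- Let F be a linear forest with no isolated vertices, and let F' be obtained from F by deleting one edge yz of F and adding an edge xz, where x is an endpoint of a path of F and z is at distance at least 3 in F from x. Then F' is a linear forest and End(F') = (End(F) ∪ {y}) \ {x}, where End denotes the set of endpoints of paths. -/
open scoped Classical
open SimpleGraph Finset

/-- A linear forest: an acyclic graph of maximum degree at most 2,
i.e. a disjoint union of paths. -/
def IsLinearForest {V : Type*} (F : SimpleGraph V) : Prop :=
  F.IsAcyclic ∧ ∀ v, (F.neighborSet v).ncard ≤ 2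

/-- The endpoints of the paths of a linear forest: the vertices of degree at most 1
(an isolated vertex being the endpoint of a trivial path). -/
noncomputable def pathEnds {V : Type*} [Fintype V] (F : SimpleGraph V) : Finset V :=
  Finset.univ.filter (fun v => F.degree v ≤ 1)

/-- Rotation of a linear forest: delete the edge `yz` and add the edge `xz`, where `x`
is an endpoint of a path of `F`, `z` is at `F`-distance at least 3 from `x` and `y` is
the neighbour of `z` on the path towards `x`.  The result is again a linear forest and
its path endpoints are `(End(F) ∪ {y}) \ {x}`. -/
theorem stmt8 {V : Type*} [Fintype V] [DecidableEq V] (F : SimpleGraph V)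
    (hF : IsLinearForest F) (hiso : ∀ v : V, 0 < F.degree v)
    (x y z : V) (hx : F.degree x ≤ 1)
    (hdist : 3 ≤ F.dist x z)
    (hyz : F.Adj y z) (hy : F.dist x y + 1 = F.dist x z)
    (F' : SimpleGraph V)
    (hF' : F' = SimpleGraph.fromEdgeSet ((F.edgeSet \ {s(y, z)}) ∪ {s(x, z)})) :
    IsLinearForest F' ∧ pathEnds F' = (pathEnds F ∪ {y}) \ {x} := by
  have hncard : ∀ (G : SimpleGraph V) (v : V), (G.neighborSet v).ncard = G.degree v := by
    intro G v
    rw [Set.ncard_eq_toFinset_card', ← SimpleGraph.neighborFinset_def]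
    rfl
  have hxz_ne : x ≠ z := by
    rintro rfl; rw [SimpleGraph.dist_self] at hdist; omega
  have hdy : 2 ≤ F.dist x y := by omega
  have hxy_ne : x ≠ y := by
    rintro rfl; rw [SimpleGraph.dist_self] at hdy; omega
  have hyz_ne : y ≠ z := hyz.ne
  have hreach_xy : F.Reachable x y := by
    by_contra h
    rw [SimpleGraph.dist_eq_zero_of_not_reachable h] at hdy; omega
  have hnadj_xz : ¬ F.Adj x z := by
    intro h
    have := SimpleGraph.dist_le (SimpleGraph.Walk.cons h SimpleGraph.Walk.nil)
    simp at this; omega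
  have hnadj_xy : ¬ F.Adj x y := by
    intro h
    have := SimpleGraph.dist_le (SimpleGraph.Walk.cons h SimpleGraph.Walk.nil)
    simp at this; omega
  -- adjacency characterization
  have hadj : ∀ a b : V, F'.Adj a b ↔ (F.Adj a b ∧ s(a,b) ≠ s(y,z)) ∨ s(a,b) = s(x,z) := by
    intro a b
    rw [hF', SimpleGraph.fromEdgeSet_adj]
    constructor
    · rintro ⟨(⟨he, hne2⟩ | he), hne⟩
      · exact Or.inl ⟨he, by simpa using hne2⟩
      · exact Or.inr (by simpa using he)
    · rintro (⟨ha, hne⟩ | he)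
      · exact ⟨Or.inl ⟨ha, by simpa using hne⟩, ha.ne⟩
      · refine ⟨Or.inr (by simpa using he), ?_⟩
        rintro rfl
        rw [Sym2.eq_iff] at he
        aesop
  -- neighbor finsets
  have hNx : F'.neighborFinset x = insert z (F.neighborFinset x) := by
    ext a
    simp only [SimpleGraph.mem_neighborFinset, hadj, Finset.mem_insert, Sym2.eq_iff]
    aesop
  have hNy : F'.neighborFinset y = (F.neighborFinset y).erase z := by
    ext a
    simp only [SimpleGraph.mem_neighborFinset, hadj, Finset.mem_erase, Sym2.eq_iff]
    aesop
  have hNz : F'.neighborFinset z = insert x ((F.neighborFinset z).erase y) := by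
    ext a
    simp only [SimpleGraph.mem_neighborFinset, hadj, Finset.mem_insert, Finset.mem_erase,
      Sym2.eq_iff]
    aesop
  have hNother : ∀ v : V, v ≠ x → v ≠ y → v ≠ z → F'.neighborFinset v = F.neighborFinset v := by
    intro v hvx hvy hvz
    ext a
    simp only [SimpleGraph.mem_neighborFinset, hadj, Sym2.eq_iff]
    aesop
  -- degrees
  have hdx : F.degree x = 1 := le_antisymm hx (hiso x)
  have hdegx : F'.degree x = 2 := by
    rw [SimpleGraph.degree, hNx, Finset.card_insert_of_notMem
      (by simp [SimpleGraph.mem_neighborFinset, hnadj_xz])]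
    rw [← SimpleGraph.degree, hdx]
  have hdegy : F'.degree y = F.degree y - 1 := by
    rw [SimpleGraph.degree, hNy, Finset.card_erase_of_mem
      (by simp [SimpleGraph.mem_neighborFinset, hyz])]
    rfl
  have hdegz : F'.degree z = F.degree z := by
    rw [SimpleGraph.degree, hNz, Finset.card_insert_of_notMem
      (by simp [SimpleGraph.mem_neighborFinset]; intro _ h; exact hnadj_xz h.symm)]
    rw [Finset.card_erase_of_mem (by simp [SimpleGraph.mem_neighborFinset, hyz.symm])]
    have : 0 < F.degree z := hiso z
    rw [← SimpleGraph.degree]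
    omega
  have hdegother : ∀ v : V, v ≠ x → v ≠ y → v ≠ z → F'.degree v = F.degree v := by
    intro v h1 h2 h3
    rw [SimpleGraph.degree, hNother v h1 h2 h3]; rfl
  have hdegle : ∀ v : V, F.degree v ≤ 2 := by
    intro v; rw [← hncard]; exact hF.2 v
  -- key nonreachability
  have key : ¬ (SimpleGraph.fromEdgeSet (F.edgeSet \ {s(y,z)})).Reachable x z := by
    rintro ⟨p0⟩
    have hp1 : p0.bypass.IsPath := SimpleGraph.Walk.bypass_isPath _
    have hsub : ∀ e ∈ p0.bypass.edges, e ∈ F.edgeSet := by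
      intro e he
      have h1 := SimpleGraph.Walk.edges_subset_edgeSet _ he
      rw [SimpleGraph.edgeSet_fromEdgeSet] at h1
      exact h1.1.1
    set p := p0.bypass.transfer F hsub with hp
    have hpPath : p.IsPath := hp1.transfer _
    have hpe : s(y,z) ∉ p.edges := by
      rw [hp, SimpleGraph.Walk.edges_transfer]
      intro he
      have h1 := SimpleGraph.Walk.edges_subset_edgeSet _ he
      rw [SimpleGraph.edgeSet_fromEdgeSet] at h1
      exact h1.1.2 rfl
    obtain ⟨q0, hq0⟩ := hreach_xy.exists_walk_length_eq_dist
    have hqlen : q0.bypass.length = F.dist x y :=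
      le_antisymm (hq0 ▸ SimpleGraph.Walk.length_bypass_le _) (SimpleGraph.dist_le _)
    have hzq : z ∉ q0.bypass.support := by
      intro hz
      have h1 : F.dist x z ≤ (q0.bypass.takeUntil z hz).length := SimpleGraph.dist_le _
      have h2 := SimpleGraph.Walk.length_takeUntil_le q0.bypass hz
      omega
    set q := q0.bypass.concat hyz with hq
    have hqPath : q.IsPath := by
      rw [SimpleGraph.Walk.isPath_def, hq, SimpleGraph.Walk.support_concat,
        List.nodup_append]
      refine ⟨(SimpleGraph.Walk.bypass_isPath q0).support_nodup, List.nodup_singleton z, ?_⟩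
      intro a ha b hb
      rw [List.mem_singleton] at hb
      rw [hb]
      exact fun h => hzq (h ▸ ha)
    have huniq := SimpleGraph.isAcyclic_iff_path_unique.mp hF.1
      (⟨p, hpPath⟩ : F.Path x z) ⟨q, hqPath⟩
    apply hpe
    have hpq : p = q := congrArg Subtype.val huniq
    rw [hpq, hq, SimpleGraph.Walk.edges_concat]
    simp
  -- acyclicity of F'
  have hle : F' \ SimpleGraph.fromEdgeSet {s(x,z)} ≤ SimpleGraph.fromEdgeSet (F.edgeSet \ {s(y,z)}) := by
    intro a b hab
    rw [SimpleGraph.sdiff_adj] at hab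
    obtain ⟨h1, h2⟩ := hab
    rw [SimpleGraph.fromEdgeSet_adj] at h2
    push_neg at h2
    rw [hadj] at h1
    rcases h1 with ⟨ha, hne⟩ | he
    · rw [SimpleGraph.fromEdgeSet_adj]
      exact ⟨⟨ha, hne⟩, ha.ne⟩
    · exfalso
      have hab_ne : a ≠ b := by
        rintro rfl
        rw [Sym2.eq_iff] at he
        aesop
      exact hab_ne (h2 (by simpa using he))
  have hacyc : F'.IsAcyclic := by
    intro v c hc
    by_cases hmem : s(x,z) ∈ c.edges
    · have hadjxz : F'.Adj x z := by rw [hadj]; exact Or.inr rfl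
      have hnb : ¬ F'.IsBridge s(x,z) := by
        rw [SimpleGraph.isBridge_iff_adj_and_forall_cycle_notMem]
        push_neg
        exact ⟨v, c, hc, hmem⟩
        exact hadjxz
      rw [SimpleGraph.isBridge_iff] at hnb
      push_neg at hnb
      exact key (hnb.mono hle)
    · have hsub : ∀ e ∈ c.edges, e ∈ F.edgeSet := by
        intro e he
        have h1 := SimpleGraph.Walk.edges_subset_edgeSet _ he
        rw [hF', SimpleGraph.edgeSet_fromEdgeSet] at h1
        rcases h1.1 with ⟨hf, _⟩ | hx'
        · exact hf
        · exact absurd (hx' ▸ he) hmem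
      exact hF.1 _ (hc.transfer hsub)
  refine ⟨⟨hacyc, ?_⟩, ?_⟩
  · intro v
    rw [hncard]
    by_cases h1 : v = x
    · rw [h1, hdegx]
    by_cases h2 : v = y
    · rw [h2, hdegy]; have := hdegle y; omega
    by_cases h3 : v = z
    · rw [h3, hdegz]; exact hdegle z
    · rw [hdegother v h1 h2 h3]; exact hdegle v
  · ext v
    simp only [pathEnds, Finset.mem_filter, Finset.mem_univ, true_and, Finset.mem_sdiff,
      Finset.mem_union, Finset.mem_singleton]
    by_cases h1 : v = x
    · rw [h1]
      simp [hdegx]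
    by_cases h2 : v = y
    · rw [h2]
      have h2' := hdegle y
      have : F'.degree y ≤ 1 := by rw [hdegy]; omega
      constructor
      · intro _; exact ⟨Or.inr rfl, fun h => hxy_ne h.symm⟩
      · intro _; exact this
    by_cases h3 : v = z
    · rw [h3]
      rw [hdegz]
      constructor
      · intro h; exact ⟨Or.inl h, fun h => hxz_ne h.symm⟩
      · rintro ⟨(h | h), _⟩
        · exact h
        · exact absurd h hyz_ne.symm
    · rw [hdegother v h1 h2 h3]
      constructor
      · intro h; exact ⟨Or.inl h, h1⟩
      · rintro ⟨(h | h), _⟩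
        · exact h
        · exact absurd h h2
end

section
/- Let H1 be an (A1, B1)-linking structure and H2 be an (A2, B2)-linking structure, vertex-disjoint, with |A1| = |B1| = |A2| = |B2|, and suppose all linking paths in H1 have length ℓ1 and all in H2 have length ℓ2. Let H be obtained from the disjoint union of H1 and H2 by adding a perfect matching between B1 and A2 identified via a fixed bijection ψ: B1 → A2 (i.e., edges b ψ(b)). Then H is an (A1, B2)-linking structure. -/
open scoped Classical
open SimpleGraph Finset

/-- `H` is an `(A,B)`-linking structure: `A` and `B` are disjoint sets of equal size and,
for every bijection `φ : A → B`, there are vertex-disjoint paths of equal length covering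
all vertices of `H`, each joining some `a ∈ A` to `φ a`. -/
def IsLinkingStructure {V : Type*} (H : SimpleGraph V) (A B : Finset V) : Prop :=
  Disjoint A B ∧ A.card = B.card ∧
  ∀ φ : A → B, Function.Bijective φ →
    ∃ P : ∀ a : A, H.Walk (a : V) ((φ a : V)),
      (∀ a, (P a).IsPath) ∧
      (∃ L, ∀ a, (P a).length = L) ∧
      (∀ a a' : A, a ≠ a' → ∀ v, v ∈ (P a).support → v ∉ (P a').support) ∧
      (∀ v : V, ∃ a, v ∈ (P a).support)

/-- An `(A,B)`-linking structure in which, for every bijection, all the linking paths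
have the fixed length `ℓ`. -/
def IsLinkingStructureLen {V : Type*} (H : SimpleGraph V) (A B : Finset V) (ℓ : ℕ) : Prop :=
  Disjoint A B ∧ A.card = B.card ∧
  ∀ φ : A → B, Function.Bijective φ →
    ∃ P : ∀ a : A, H.Walk (a : V) ((φ a : V)),
      (∀ a, (P a).IsPath) ∧
      (∀ a, (P a).length = ℓ) ∧
      (∀ a a' : A, a ≠ a' → ∀ v, v ∈ (P a).support → v ∉ (P a').support) ∧
      (∀ v : V, ∃ a, v ∈ (P a).support)

abbrev homL {V1 V2 : Type*} (H1 : SimpleGraph V1) (H : SimpleGraph (V1 ⊕ V2))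
    (h : ∀ u v : V1, H.Adj (Sum.inl u) (Sum.inl v) ↔ H1.Adj u v) : H1 →g H :=
  ⟨Sum.inl, fun hadj => (h _ _).2 hadj⟩

@[simp] lemma homL_coe {V1 V2 : Type*} (H1 : SimpleGraph V1) (H : SimpleGraph (V1 ⊕ V2))
    (h : ∀ u v : V1, H.Adj (Sum.inl u) (Sum.inl v) ↔ H1.Adj u v) :
    ⇑(homL H1 H h) = Sum.inl := rfl

abbrev homR {V1 V2 : Type*} (H2 : SimpleGraph V2) (H : SimpleGraph (V1 ⊕ V2))
    (h : ∀ u v : V2, H.Adj (Sum.inr u) (Sum.inr v) ↔ H2.Adj u v) : H2 →g H :=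
  ⟨Sum.inr, fun hadj => (h _ _).2 hadj⟩

@[simp] lemma homR_coe {V1 V2 : Type*} (H2 : SimpleGraph V2) (H : SimpleGraph (V1 ⊕ V2))
    (h : ∀ u v : V2, H.Adj (Sum.inr u) (Sum.inr v) ↔ H2.Adj u v) :
    ⇑(homR H2 H h) = Sum.inr := rfl


/-- Composing two vertex-disjoint linking structures (with fixed path lengths `ℓ1`, `ℓ2`)
by a perfect matching from `B1` to `A2` given by a bijection `ψ` yields an
`(A1,B2)`-linking structure. -/
theorem stmt14 {V1 V2 : Type*} [Fintype V1] [Fintype V2] [DecidableEq V1] [DecidableEq V2]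
    (H1 : SimpleGraph V1) (H2 : SimpleGraph V2)
    (A1 B1 : Finset V1) (A2 B2 : Finset V2) (ℓ1 ℓ2 : ℕ)
    (h1 : IsLinkingStructureLen H1 A1 B1 ℓ1) (h2 : IsLinkingStructureLen H2 A2 B2 ℓ2)
    (ψ : V1 → V2) (hψmap : ∀ b ∈ B1, ψ b ∈ A2) (hψinj : Set.InjOn ψ ↑B1)
    (hψsurj : ∀ a ∈ A2, ∃ b ∈ B1, ψ b = a) (hcard : B1.card = A2.card)
    (H : SimpleGraph (V1 ⊕ V2))
    (hHl : ∀ u v : V1, H.Adj (Sum.inl u) (Sum.inl v) ↔ H1.Adj u v)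
    (hHr : ∀ u v : V2, H.Adj (Sum.inr u) (Sum.inr v) ↔ H2.Adj u v)
    (hHm : ∀ (u : V1) (v : V2), H.Adj (Sum.inl u) (Sum.inr v) ↔ (u ∈ B1 ∧ v = ψ u)) :
    IsLinkingStructure H (A1.map ⟨Sum.inl, Sum.inl_injective⟩)
      (B2.map ⟨Sum.inr, Sum.inr_injective⟩) := by
  classical
  obtain ⟨hd1, hc1, hP1⟩ := h1
  obtain ⟨hd2, hc2, hP2⟩ := h2
  refine ⟨?_, ?_, ?_⟩
  · rw [Finset.disjoint_left]
    rintro x hx hx'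
    simp only [Finset.mem_map, Function.Embedding.coeFn_mk] at hx hx'
    obtain ⟨a, -, rfl⟩ := hx
    obtain ⟨b, -, hb⟩ := hx'
    cases hb
  · simp only [Finset.card_map]
    omega
  · intro φ hφ
    -- equivalences
    let eA : A1 ≃ (A1.map ⟨Sum.inl, Sum.inl_injective⟩ : Finset (V1 ⊕ V2)) :=
      Equiv.ofBijective (fun a => ⟨Sum.inl (a : V1), Finset.mem_map_of_mem _ a.2⟩)
        ⟨fun a b h => Subtype.ext (Sum.inl_injective (congrArg Subtype.val h)),
         fun x => by
           obtain ⟨a, ha, hax⟩ := Finset.mem_map.1 x.2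
           exact ⟨⟨a, ha⟩, Subtype.ext hax⟩⟩
    let eB : B2 ≃ (B2.map ⟨Sum.inr, Sum.inr_injective⟩ : Finset (V1 ⊕ V2)) :=
      Equiv.ofBijective (fun b => ⟨Sum.inr (b : V2), Finset.mem_map_of_mem _ b.2⟩)
        ⟨fun a b h => Subtype.ext (Sum.inr_injective (congrArg Subtype.val h)),
         fun x => by
           obtain ⟨a, ha, hax⟩ := Finset.mem_map.1 x.2
           exact ⟨⟨a, ha⟩, Subtype.ext hax⟩⟩
    let ψe : (B1 : Finset V1) ≃ (A2 : Finset V2) :=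
      Equiv.ofBijective (fun b => ⟨ψ (b : V1), hψmap _ b.2⟩)
        ⟨fun a b h => Subtype.ext (hψinj a.2 b.2 (congrArg Subtype.val h)),
         fun a => by
           obtain ⟨b, hb, hba⟩ := hψsurj (a : V2) a.2
           exact ⟨⟨b, hb⟩, Subtype.ext hba⟩⟩
    let φ1 : (A1 : Finset V1) ≃ B1 := Finset.equivOfCardEq hc1
    let φ2e : (A2 : Finset V2) ≃ B2 :=
      ψe.symm.trans (φ1.symm.trans ((eA.trans (Equiv.ofBijective φ hφ)).trans eB.symm))
    obtain ⟨P1, hpath1, hlen1, hdisj1, hcov1⟩ := hP1 φ1 φ1.bijective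
    obtain ⟨P2, hpath2, hlen2, hdisj2, hcov2⟩ := hP2 φ2e φ2e.bijective
    have key : ∀ x : A1, φ2e (ψe (φ1 x)) = eB.symm (φ (eA x)) := by
      intro x
      simp only [φ2e, Equiv.trans_apply, Equiv.symm_apply_apply, Equiv.ofBijective_apply]
    have hstart : ∀ a : (A1.map ⟨Sum.inl, Sum.inl_injective⟩ : Finset (V1 ⊕ V2)),
        (Sum.inl ((eA.symm a : A1) : V1) : V1 ⊕ V2) = (a : V1 ⊕ V2) :=
      fun a => congrArg Subtype.val (eA.apply_symm_apply a)
    have hend : ∀ a : (A1.map ⟨Sum.inl, Sum.inl_injective⟩ : Finset (V1 ⊕ V2)),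
        (Sum.inr ((φ2e (ψe (φ1 (eA.symm a))) : B2) : V2) : V1 ⊕ V2) = ((φ a : _) : V1 ⊕ V2) := by
      intro a
      rw [key, Equiv.apply_symm_apply]
      exact congrArg Subtype.val (eB.apply_symm_apply (φ a))
    let W : ∀ a : (A1.map ⟨Sum.inl, Sum.inl_injective⟩ : Finset (V1 ⊕ V2)),
        H.Walk (a : V1 ⊕ V2) ((φ a : _) : V1 ⊕ V2) := fun a =>
      (((P1 (eA.symm a)).map (homL H1 H hHl)).append
        (Walk.cons ((hHm ((φ1 (eA.symm a) : B1) : V1) ((ψe (φ1 (eA.symm a)) : A2) : V2)).2 ⟨(φ1 (eA.symm a)).2, rfl⟩)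
          ((P2 (ψe (φ1 (eA.symm a)))).map (homR H2 H hHr)))).copy (hstart a) (hend a)
    have hWsup : ∀ a, (W a).support =
        ((P1 (eA.symm a)).support.map Sum.inl)
          ++ ((P2 (ψe (φ1 (eA.symm a)))).support.map Sum.inr) := by
      intro a
      simp only [W, Walk.support_copy, Walk.support_append, Walk.support_cons,
        Walk.support_map, homL_coe, homR_coe, List.tail_cons]
    refine ⟨W, ?_, ?_, ?_, ?_⟩
    · intro a
      rw [Walk.isPath_def, hWsup a]
      refine List.Nodup.append ?_ ?_ ?_
      · exact ((hpath1 _).support_nodup).map Sum.inl_injective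
      · exact ((hpath2 _).support_nodup).map Sum.inr_injective
      · intro x hx hx'
        obtain ⟨u, -, rfl⟩ := List.mem_map.1 hx
        obtain ⟨v, -, hv⟩ := List.mem_map.1 hx'
        cases hv
    · refine ⟨ℓ1 + (ℓ2 + 1), fun a => ?_⟩
      simp only [W, Walk.length_copy, Walk.length_append, Walk.length_cons,
        Walk.length_map, hlen1, hlen2]
    · intro a a' hne v hv hv'
      rw [hWsup] at hv hv'
      have hne1 : eA.symm a ≠ eA.symm a' := fun h => hne (eA.symm.injective h)
      rcases List.mem_append.1 hv with h | h
      · obtain ⟨u, hu, rfl⟩ := List.mem_map.1 h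
        rcases List.mem_append.1 hv' with h' | h'
        · obtain ⟨u', hu', hu'e⟩ := List.mem_map.1 h'
          cases Sum.inl_injective hu'e
          exact hdisj1 _ _ hne1 _ hu hu'
        · obtain ⟨u', -, hu'e⟩ := List.mem_map.1 h'
          cases hu'e
      · obtain ⟨u, hu, rfl⟩ := List.mem_map.1 h
        rcases List.mem_append.1 hv' with h' | h'
        · obtain ⟨u', -, hu'e⟩ := List.mem_map.1 h'
          cases hu'e
        · obtain ⟨u', hu', hu'e⟩ := List.mem_map.1 h'
          cases Sum.inr_injective hu'e
          have hne2 : ψe (φ1 (eA.symm a)) ≠ ψe (φ1 (eA.symm a')) := fun h =>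
            hne1 (φ1.injective (ψe.injective h))
          exact hdisj2 _ _ hne2 _ hu hu'
    · intro v
      rcases v with x | y
      · obtain ⟨a0, ha0⟩ := hcov1 x
        refine ⟨eA a0, ?_⟩
        rw [hWsup, Equiv.symm_apply_apply]
        exact List.mem_append.2 (Or.inl (List.mem_map.2 ⟨x, ha0, rfl⟩))
      · obtain ⟨a2, ha2⟩ := hcov2 y
        have ha2' : ψe (φ1 (φ1.symm (ψe.symm a2))) = a2 := by
          rw [Equiv.apply_symm_apply, Equiv.apply_symm_apply]
        refine ⟨eA (φ1.symm (ψe.symm a2)), ?_⟩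
        rw [hWsup, Equiv.symm_apply_apply]
        refine List.mem_append.2 (Or.inr (List.mem_map.2 ⟨y, ?_, rfl⟩))
        rw [ha2']
        exact ha2
end

section
/- Let F be a linear forest and F' a k-rotation of F starting at v. If S is a set of new endpoints with E^k_U(v,F) ⊆ S ⊆ E^{k+1}_U(v,F), then the set of pivot vertices used in the 1-rotations producing endpoints in S has size at most 2|S|. -/
open scoped Classical
open SimpleGraph Finset

/-- The interior of a set `U` with respect to `F`: vertices of `U` all of whose
`F`-neighbours lie in `U`. -/
def interiorSet {V : Type*} (F : SimpleGraph V) (U : Set V) : Set V :=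
  {u ∈ U | ∀ w, F.Adj u w → w ∈ U}

/-- `x` is an endpoint of a path of `F` (degree at most 1). -/
def IsEndpoint {V : Type*} (F : SimpleGraph V) (x : V) : Prop :=
  (F.neighborSet x).Subsingleton

/-- A 1-rotation of the linear forest `F` in `G` with old endpoint `x`, pivot `z` and new
endpoint `y`: delete the broken edge `yz` of `F` (or take `y = z` if `z` is isolated in
`F`) and add the edge `xz ∈ E(G)`. -/
def IsOneRotation {V : Type*} (G F F' : SimpleGraph V) (x z y : V) : Prop :=
  IsEndpoint F x ∧ G.Adj x z ∧
  (F.Adj z y ∨ (y = z ∧ ∀ w, ¬ F.Adj z w)) ∧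
  F' = SimpleGraph.fromEdgeSet ((F.edgeSet \ {s(y, z)}) ∪ {s(x, z)})

/-- A `(U,k)`-rotation of `F` in `G` starting at `v`: a sequence of `k` consecutive
1-rotations, each starting at the previous new endpoint, with all pivots in
`int_F(U)` and each pivot at `F`-distance at least 3 from the start vertex and from all
previous pivots (so all broken edges belong to `F`). -/
structure RotSeq {V : Type*} (G F : SimpleGraph V) (U : Set V) (v : V) (k : ℕ) where
  forest : ℕ → SimpleGraph V
  endpt : ℕ → V
  pivot : ℕ → V
  forest_zero : forest 0 = F
  endpt_zero : endpt 0 = v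
  step : ∀ i < k, IsOneRotation G (forest i) (forest (i + 1)) (endpt i) (pivot (i + 1))
    (endpt (i + 1))
  pivot_int : ∀ i, 1 ≤ i → i ≤ k → pivot i ∈ interiorSet F U
  pivot_dist_start : ∀ i, 1 ≤ i → i ≤ k → 3 ≤ F.dist v (pivot i)
  pivot_dist_pivot : ∀ i j, 1 ≤ j → j < i → i ≤ k → 3 ≤ F.dist (pivot j) (pivot i)

/-- `E^k_U(v,F)`: the set of new endpoints obtainable from `v` by `(U,i)`-rotations
with `i ≤ k`. -/
def rotEndpoints {V : Type*} (G F : SimpleGraph V) (U : Set V) (v : V) (k : ℕ) : Set V :=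
  {y | ∃ i ≤ k, ∃ R : RotSeq G F U v i, R.endpt i = y}

/-- Truncation of a rotation sequence. -/
def RotSeq.trunc {V : Type*} {G F : SimpleGraph V} {U : Set V} {v : V} {m : ℕ}
    (R : RotSeq G F U v m) (j : ℕ) (h : j ≤ m) : RotSeq G F U v j where
  forest := R.forest
  endpt := R.endpt
  pivot := R.pivot
  forest_zero := R.forest_zero
  endpt_zero := R.endpt_zero
  step := fun i hi => R.step i (lt_of_lt_of_le hi h)
  pivot_int := fun i h1 h2 => R.pivot_int i h1 (h2.trans h)
  pivot_dist_start := fun i h1 h2 => R.pivot_dist_start i h1 (h2.trans h)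
  pivot_dist_pivot := fun i j' h1 h2 h3 => R.pivot_dist_pivot i j' h1 h2 (h3.trans h)

/-- Key invariant: vertices far from the start and all pivots keep their neighbourhood,
and each pivot is `F`-adjacent to (or equal to, if isolated) its new endpoint. -/
theorem rot_key {V : Type*} {G F : SimpleGraph V} {U : Set V} {v : V} {m : ℕ}
    (R : RotSeq G F U v m) :
    ∀ i ≤ m,
      (∀ w, 2 ≤ F.dist v w → (∀ j, 1 ≤ j → j ≤ i → 2 ≤ F.dist (R.pivot j) w) →
        ∀ u, (R.forest i).Adj w u ↔ F.Adj w u) ∧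
      (∀ j, 1 ≤ j → j ≤ i → F.Adj (R.pivot j) (R.endpt j) ∨
        (R.endpt j = R.pivot j ∧ ∀ w, ¬ F.Adj (R.pivot j) w)) := by
  intro i
  induction i with
  | zero =>
    intro _
    refine ⟨fun w _ _ u => by rw [R.forest_zero], fun j h1 h2 => by omega⟩
  | succ i IH =>
    intro him
    have IH' := IH (by omega)
    obtain ⟨hend, hadj, hbr, heq⟩ := R.step i (by omega)
    set z := R.pivot (i + 1) with hz
    set y := R.endpt (i + 1) with hy
    set x := R.endpt i with hx
    -- neighbourhood of z is unchanged after i steps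
    have hdv : 2 ≤ F.dist v z :=
      le_trans (by norm_num) (R.pivot_dist_start (i + 1) (by omega) him)
    have hdp : ∀ j, 1 ≤ j → j ≤ i → 2 ≤ F.dist (R.pivot j) z := fun j h1 h2 =>
      le_trans (by norm_num) (R.pivot_dist_pivot (i + 1) j h1 (by omega) him)
    have hNz := IH'.1 z hdv hdp
    -- part (a) at step i+1
    have ha : F.Adj z y ∨ (y = z ∧ ∀ w, ¬ F.Adj z w) := by
      rcases hbr with h | ⟨h1, h2⟩
      · exact Or.inl ((hNz y).mp h)
      · exact Or.inr ⟨h1, fun w hw => h2 w ((hNz w).mpr hw)⟩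
    have hafull : ∀ j, 1 ≤ j → j ≤ i + 1 → F.Adj (R.pivot j) (R.endpt j) ∨
        (R.endpt j = R.pivot j ∧ ∀ w, ¬ F.Adj (R.pivot j) w) := by
      intro j h1 h2
      rcases Nat.lt_or_ge j (i + 1) with h | h
      · exact IH'.2 j h1 (by omega)
      · have : j = i + 1 := by omega
        subst this; exact ha
    refine ⟨?_, hafull⟩
    intro w hv hp u
    have hNw := IH'.1 w hv (fun j h1 h2 => hp j h1 (by omega))
    have hwz : w ≠ z := by
      intro h
      have := hp (i + 1) (by omega) le_rfl
      rw [h] at this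
      simp [← hz, SimpleGraph.dist_self] at this
    have hwx : w ≠ x := by
      rcases Nat.eq_zero_or_pos i with h0 | h0
      · intro h
        have hxv : x = v := by rw [hx, h0, R.endpt_zero]
        rw [h, hxv, SimpleGraph.dist_self] at hv
        omega
      · rcases IH'.2 i h0 le_rfl with h | ⟨h1, _⟩
        · intro h
          have hd1 : F.dist (R.pivot i) (R.endpt i) = 1 :=
            SimpleGraph.dist_eq_one_iff_adj.mpr ‹F.Adj (R.pivot i) (R.endpt i)›
          have h2 := hp i h0 (by omega)
          rw [h, hx] at h2
          omega
        · intro h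
          have h2 := hp i h0 (by omega)
          rw [h, hx, ← h1, SimpleGraph.dist_self] at h2
          omega
    have hwy : w ≠ y := by
      rcases ha with h | ⟨h1, _⟩
      · intro h'
        have hd1 : F.dist z y = 1 := SimpleGraph.dist_eq_one_iff_adj.mpr h
        have h2 := hp (i + 1) (by omega) le_rfl
        rw [← hz, h'] at h2
        omega
      · rw [h1]; exact hwz
    rw [heq, SimpleGraph.fromEdgeSet_adj]
    constructor
    · rintro ⟨hmem, hne⟩
      rcases hmem with ⟨he, _⟩ | hxe
      · exact (hNw u).mp ((R.forest i).mem_edgeSet.mp he)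
      · rw [Set.mem_singleton_iff, Sym2.eq_iff] at hxe
        rcases hxe with ⟨h1, _⟩ | ⟨h1, _⟩
        · exact absurd h1 hwx
        · exact absurd h1 hwz
    · intro hF'
      refine ⟨Or.inl ⟨(R.forest i).mem_edgeSet.mpr ((hNw u).mpr hF'), ?_⟩, hF'.ne⟩
      rw [Set.mem_singleton_iff, Sym2.eq_iff]
      rintro (⟨h1, _⟩ | ⟨h1, _⟩)
      · exact hwy h1
      · exact hwz h1

/-- If `E^k_U(v,F) ⊆ S ⊆ E^{k+1}_U(v,F)`, then the set of pivots used in the 1-rotations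
producing new endpoints in `S` has size at most `2|S|`. -/
theorem stmt18 {V : Type*} [Fintype V] [DecidableEq V] (G F : SimpleGraph V)
    (hF : IsLinearForest F) (hFG : F ≤ G) (U : Set V) (v : V) (k : ℕ)
    (R0 : RotSeq G F U v k) (S : Finset V)
    (hS1 : rotEndpoints G F U v k ⊆ ↑S) (hS2 : ↑S ⊆ rotEndpoints G F U v (k + 1)) :
    Set.ncard {p : V | ∃ i ≤ k + 1, ∃ R : RotSeq G F U v i,
        R.endpt i ∈ S ∧ ∃ j, 1 ≤ j ∧ j ≤ i ∧ R.pivot j = p}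
      ≤ 2 * S.card := by
  set A : V → Finset V := fun y => if ∀ w, ¬ F.Adj y w then {y} else F.neighborFinset y
    with hAdef
  have hA : ∀ y, (A y).card ≤ 2 := by
    intro y
    rw [hAdef]
    by_cases h : ∀ w, ¬ F.Adj y w
    · simp [h]
    · simp only [h, if_false]
      have : (F.neighborFinset y).card = (F.neighborSet y).ncard := by
        rw [SimpleGraph.neighborFinset_def, Set.ncard_eq_toFinset_card']
      rw [this]
      exact hF.2 y
  have hsub : {p : V | ∃ i ≤ k + 1, ∃ R : RotSeq G F U v i,
      R.endpt i ∈ S ∧ ∃ j, 1 ≤ j ∧ j ≤ i ∧ R.pivot j = p} ⊆ ↑(S.biUnion A) := by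
    rintro p ⟨i, him, R, hRS, j, hj1, hji, hpj⟩
    set y := R.endpt j with hy
    have hyS : y ∈ S := by
      rcases Nat.lt_or_ge k j with h | h
      · have hji' : j = i := by omega
        rw [hy, hji']; exact hRS
      · exact hS1 ⟨j, h, R.trunc j hji, rfl⟩
    have hkey := (rot_key R i le_rfl).2 j hj1 hji
    rw [hpj] at hkey
    simp only [Finset.coe_biUnion, Set.mem_iUnion, Finset.mem_coe]
    refine ⟨y, hyS, ?_⟩
    rcases hkey with h | ⟨h1, h2⟩
    · have hcond : ¬ ∀ w, ¬ F.Adj y w := by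
        push_neg
        exact ⟨p, h.symm⟩
      show p ∈ if ∀ w, ¬ F.Adj y w then {y} else F.neighborFinset y
      rw [if_neg hcond, SimpleGraph.mem_neighborFinset]
      exact h.symm
    · have h1' : y = p := by rw [hy]; exact h1
      have hcond : ∀ w, ¬ F.Adj y w := by rw [h1']; exact h2
      show p ∈ if ∀ w, ¬ F.Adj y w then {y} else F.neighborFinset y
      rw [if_pos hcond, Finset.mem_singleton]
      exact h1'.symm
  calc Set.ncard {p : V | ∃ i ≤ k + 1, ∃ R : RotSeq G F U v i,
        R.endpt i ∈ S ∧ ∃ j, 1 ≤ j ∧ j ≤ i ∧ R.pivot j = p}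
      ≤ (↑(S.biUnion A) : Set V).ncard :=
        Set.ncard_le_ncard hsub (Finset.finite_toSet _)
    _ = (S.biUnion A).card := Set.ncard_coe_finset _
    _ ≤ ∑ y ∈ S, (A y).card := Finset.card_biUnion_le
    _ ≤ ∑ _y ∈ S, 2 := Finset.sum_le_sum fun y _ => hA y
    _ = 2 * S.card := by rw [Finset.sum_const, smul_eq_mul, mul_comm]
end
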